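/- Assume P is the identity matrix and X_{i,j} = 0 whenever dist(i,j) > R. Let i, j ∈ L, set a_{i,j} = max{0, ⌈d_{i,j}−1⌉}, assume a_{i,j} ≥ 1, and let t ∈ ℝ satisfy e·τ < 2a_{i,j}+1. Then |C^{pp}_{i,j}(t)| ≤ √‖X‖ · (eτ/(2a_{i,j}+1))^{2a_{i,j}} / (√(a_{i,j}) · (1 − (eτ/(2a_{i,j}+1))²)). -/

import Mathlib

open scoped Nat

noncomputable def l2OpNorm {V : Type*} [Fintype V] [DecidableEq V] (M : Matrix V V ℝ) : ℝ :=
  ‖Matrix.toEuclideanCLM (𝕜 := ℝ) M‖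

noncomputable def Cpp {V : Type*} [Fintype V] [DecidableEq V]
    (X : Matrix V V ℝ) (i j : V) (t : ℝ) : ℝ :=
  ∑' n : ℕ, (-1 : ℝ) ^ n * t ^ (2 * n + 1) * ((X ^ (n + 1)) i j) / (Nat.factorial (2 * n + 1))

lemma factorial_ge_sqrt (k : ℕ) (hk : 1 ≤ k) :
    Real.sqrt (2 * k) * ((k : ℝ) / Real.exp 1) ^ k ≤ (k ! : ℝ) := by
  have hmono := Stirling.stirlingSeq'_antitone
  have htend : Filter.Tendsto (Stirling.stirlingSeq ∘ Nat.succ) Filter.atTop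
      (nhds (Real.sqrt Real.pi)) :=
    Stirling.tendsto_stirlingSeq_sqrt_pi.comp (Filter.tendsto_add_atTop_nat 1)
  have hpi : (1 : ℝ) ≤ Real.sqrt Real.pi := by
    rw [show (1:ℝ) = Real.sqrt 1 by simp]
    exact Real.sqrt_le_sqrt (by linarith [Real.pi_gt_three])
  obtain ⟨m, rfl⟩ : ∃ m, k = m + 1 := ⟨k - 1, (Nat.succ_pred_eq_of_pos hk).symm⟩
  have h1 : Real.sqrt Real.pi ≤ Stirling.stirlingSeq (m + 1) :=
    hmono.le_of_tendsto htend m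
  have hden : 0 < Real.sqrt (2 * (m+1 : ℕ)) * (((m+1 : ℕ) : ℝ) / Real.exp 1) ^ (m+1) := by
    have : (0:ℝ) < ((m+1 : ℕ) : ℝ) := by positivity
    positivity
  have := le_trans hpi h1
  rw [Stirling.stirlingSeq, le_div_iff₀ hden, one_mul] at this
  exact this

lemma entry_abs_le {V : Type*} [Fintype V] [DecidableEq V] (M : Matrix V V ℝ) (i j : V) :
    |M i j| ≤ l2OpNorm M := by
  set T := Matrix.toEuclideanCLM (𝕜 := ℝ) M
  set u : EuclideanSpace ℝ V := EuclideanSpace.single j (1 : ℝ)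
  have hTu : T u = (WithLp.equiv _ _).symm (Matrix.toLin' M (Pi.single j 1)) := by
    have : u = (WithLp.equiv _ _).symm (Pi.single j (1:ℝ)) := rfl
    rw [this]; rfl
  have happ : T u i = M i j := by
    rw [hTu]
    simp [Matrix.toLin'_apply, Matrix.mulVec_single]
  have h1 : |T u i| ≤ ‖T u‖ := by
    rw [EuclideanSpace.norm_eq]
    have : |T u i| = Real.sqrt ((T u i)^2) := by rw [Real.sqrt_sq_eq_abs]
    rw [this]
    apply Real.sqrt_le_sqrt
    have := Finset.single_le_sum (f := fun k => ‖T u k‖^2)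
      (fun k _ => by positivity) (Finset.mem_univ i)
    simpa [sq_abs] using this
  calc |M i j| = |T u i| := by rw [happ]
    _ ≤ ‖T u‖ := h1
    _ ≤ ‖T‖ * ‖u‖ := T.le_opNorm u
    _ = l2OpNorm M := by
        have hu : ‖u‖ = 1 := by
          rw [show u = EuclideanSpace.single j (1:ℝ) from rfl, EuclideanSpace.norm_single]
          norm_num
        rw [hu, mul_one]; rfl

lemma l2OpNorm_pow_le {V : Type*} [Fintype V] [DecidableEq V] (M : Matrix V V ℝ) (n : ℕ) :
    l2OpNorm (M ^ (n+1)) ≤ (l2OpNorm M) ^ (n+1) := by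
  unfold l2OpNorm
  rw [map_pow]
  exact norm_pow_le' _ (Nat.succ_pos n)

lemma aux_alg (x k e2 s2 : ℝ) (hk : k ≠ 0) (he : e2 ≠ 0) (hs2 : s2 ≠ 0) (m : ℕ) :
    x ^ m / (s2 * (k / e2) ^ m) = (e2 * x / k) ^ m / s2 := by
  field_simp
  rw [← mul_pow]; congr 1; field_simp

lemma locality {V : Type*} [Fintype V] [DecidableEq V]
    (G : SimpleGraph V) (hconn : G.Connected) (R : ℕ)
    (X : Matrix V V ℝ) (hXloc : ∀ i j : V, R < G.dist i j → X i j = 0)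
    (m : ℕ) (i : V) : ∀ j : V, m * R < G.dist i j → (X ^ m) i j = 0 := by
  induction m with
  | zero =>
    intro j h
    simp only [pow_zero, Matrix.one_apply]
    rw [if_neg]
    rintro rfl
    rw [SimpleGraph.dist_self] at h
    omega
  | succ m ih =>
    intro j h
    rw [pow_succ, Matrix.mul_apply]
    apply Finset.sum_eq_zero
    intro k _
    by_cases h1 : m * R < G.dist i k
    · rw [ih k h1, zero_mul]
    by_cases h2 : R < G.dist k j
    · rw [hXloc k j h2, mul_zero]
    push_neg at h1 h2
    exfalso
    have := hconn.dist_triangle (u := i) (v := k) (w := j)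
    have hmr : (m+1)*R = m*R + R := by ring
    omega

/-- **Causal cone for `P = 𝟙`**, `pp` commutator. With
`a = max{0, ⌈dist(i,j)/R − 1⌉} ≥ 1` and `τ = √‖X‖·|t|` satisfying `e·τ < 2a+1`,
`|C^{pp}_{i,j}(t)| ≤ √‖X‖ · (eτ/(2a+1))^{2a} / (√a · (1 − (eτ/(2a+1))²))`. -/
theorem lieb_robinson_P_one_causal_cone_pp {V : Type*} [Fintype V] [DecidableEq V]
    (G : SimpleGraph V) (hconn : G.Connected) (R : ℕ) (hR : 1 ≤ R)
    (X : Matrix V V ℝ) (hX : X.IsSymm)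
    (hXloc : ∀ i j : V, R < G.dist i j → X i j = 0)
    (i j : V) (t : ℝ)
    (ha : 1 ≤ (max 0 ⌈(G.dist i j : ℝ) / R - 1⌉).toNat)
    (hcone : Real.exp 1 * (Real.sqrt (l2OpNorm X) * |t|) <
      2 * ((max 0 ⌈(G.dist i j : ℝ) / R - 1⌉).toNat : ℝ) + 1) :
    let τ : ℝ := Real.sqrt (l2OpNorm X) * |t|
    let a : ℕ := (max 0 ⌈(G.dist i j : ℝ) / R - 1⌉).toNat
    |Cpp X i j t| ≤
      Real.sqrt (l2OpNorm X) * (Real.exp 1 * τ / (2 * (a : ℝ) + 1)) ^ (2 * a) /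
        (Real.sqrt (a : ℝ) * (1 - (Real.exp 1 * τ / (2 * (a : ℝ) + 1)) ^ 2)) := by
  intro τ a
  have ha' : 1 ≤ a := ha
  have hcone' : Real.exp 1 * τ < 2 * (a : ℝ) + 1 := hcone
  set N := l2OpNorm X with hNdef
  have hN : 0 ≤ N := norm_nonneg _
  set s := Real.sqrt N with hsdef
  have hs : 0 ≤ s := Real.sqrt_nonneg _
  have hτdef : τ = s * |t| := rfl
  have hτ : 0 ≤ τ := by rw [hτdef]; positivity
  have ha0 : (0:ℝ) < 2 * (a:ℝ) + 1 := by positivity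
  set q := Real.exp 1 * τ / (2 * (a : ℝ) + 1) with hqdef
  have hq0 : 0 ≤ q := by
    apply div_nonneg _ ha0.le
    positivity
  have hq1 : q < 1 := (div_lt_one ha0).mpr hcone'
  have hq2 : q ^ 2 < 1 := by nlinarith
  have hD : (0:ℝ) < 1 - q ^ 2 := by linarith
  set E := Real.sqrt (2 * (2 * (a:ℝ) + 1)) with hEdef
  have hE : 0 < E := Real.sqrt_pos.mpr (by positivity)
  set C := s / E with hCdef
  have hC : 0 ≤ C := div_nonneg hs hE.le
  -- the summand and its bound
  set g : ℕ → ℝ := fun n =>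
    (-1 : ℝ) ^ n * t ^ (2 * n + 1) * ((X ^ (n + 1)) i j) / (Nat.factorial (2 * n + 1))
    with hgdef
  set f : ℕ → ℝ := fun n => if n < a then 0 else C * q ^ (2 * n + 1) with hfdef
  have hfnonneg : ∀ n, 0 ≤ f n := by
    intro n
    simp only [hfdef]
    split
    · exact le_refl 0
    · positivity
  -- locality: vanishing of early terms
  have hzero : ∀ n, n < a → (X ^ (n + 1)) i j = 0 := by
    intro n hn
    apply locality G hconn R X hXloc (n+1) i j
    have hc : 0 < ⌈(G.dist i j : ℝ) / R - 1⌉ := by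
      by_contra hle
      push_neg at hle
      have h0 : (max 0 ⌈(G.dist i j : ℝ) / R - 1⌉) = 0 := max_eq_left hle
      have ha2 := ha
      rw [h0] at ha2
      simp at ha2
    have hmax : (max 0 ⌈(G.dist i j : ℝ) / R - 1⌉) = ⌈(G.dist i j : ℝ) / R - 1⌉ :=
      max_eq_right hc.le
    have hna : (n : ℤ) < ⌈(G.dist i j : ℝ) / R - 1⌉ := by
      have hn' : n < (max 0 ⌈(G.dist i j : ℝ) / R - 1⌉).toNat := hn
      rw [hmax] at hn'
      exact Int.lt_toNat.mp hn'
    have hnr : (n : ℝ) < (G.dist i j : ℝ) / R - 1 := by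
      have := Int.lt_ceil.mp hna
      exact_mod_cast this
    have hR' : (0:ℝ) < (R:ℝ) := by exact_mod_cast hR
    have : ((n:ℝ) + 1) * R < G.dist i j := by
      rw [← lt_div_iff₀ hR']
      linarith
    exact_mod_cast this
  -- term bound
  have hgle : ∀ n, ‖g n‖ ≤ f n := by
    intro n
    by_cases hn : n < a
    · simp [hgdef, hfdef, hzero n hn, hn]
    · push_neg at hn
      simp only [hfdef, if_neg (not_lt.mpr hn)]
      have hk1 : 1 ≤ 2 * n + 1 := by omega
      have hkR : (0:ℝ) < (2 * n + 1 : ℕ) := by positivity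
      have hfac : (0:ℝ) < ((2*n+1)! : ℝ) := by exact_mod_cast Nat.factorial_pos _
      have hXb : |(X ^ (n + 1)) i j| ≤ N ^ (n + 1) :=
        (entry_abs_le _ i j).trans (l2OpNorm_pow_le X n)
      have step1 : ‖g n‖ ≤ |t| ^ (2*n+1) * N ^ (n+1) / ((2*n+1)! : ℝ) := by
        simp only [hgdef, Real.norm_eq_abs, abs_div, abs_mul, abs_pow, abs_neg, abs_one,
          one_pow, one_mul, Nat.abs_cast]
        gcongr
        all_goals first
          | positivity
          | exact hXb
          | exact (abs_nonneg _).trans hXb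
      have step2 : |t| ^ (2*n+1) * N ^ (n+1) = s * τ ^ (2*n+1) := by
        have hNs : N = s ^ 2 := (Real.sq_sqrt hN).symm
        rw [hNs, hτdef]
        ring
      have hfactge := factorial_ge_sqrt (2*n+1) hk1
      have hden : 0 < Real.sqrt (2 * (2*n+1 : ℕ)) * (((2*n+1 : ℕ) : ℝ) / Real.exp 1) ^ (2*n+1) := by
        positivity
      have step3 : τ ^ (2*n+1) / ((2*n+1)! : ℝ) ≤
          (Real.exp 1 * τ / (2*n+1 : ℕ)) ^ (2*n+1) / Real.sqrt (2 * (2*n+1 : ℕ)) := by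
        calc τ ^ (2*n+1) / ((2*n+1)! : ℝ)
            ≤ τ ^ (2*n+1) / (Real.sqrt (2 * (2*n+1 : ℕ)) * (((2*n+1 : ℕ) : ℝ) / Real.exp 1) ^ (2*n+1)) := by
              gcongr
            _ = (Real.exp 1 * τ / (2*n+1 : ℕ)) ^ (2*n+1) / Real.sqrt (2 * (2*n+1 : ℕ)) :=
              aux_alg τ _ _ _ (by positivity) (by positivity) (by positivity) _
      have hcast : ((a:ℝ)) ≤ (n:ℝ) := Nat.cast_le.mpr hn
      have h41b : Real.exp 1 * τ / ((2*n+1 : ℕ):ℝ) ≤ q := by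
        rw [hqdef]
        gcongr
        all_goals first
          | positivity
          | (push_cast; linarith)
      have h41 : (Real.exp 1 * τ / ((2*n+1 : ℕ):ℝ)) ^ (2*n+1) ≤ q ^ (2*n+1) :=
        pow_le_pow_left₀ (by positivity) h41b _
      have h42 : E ≤ Real.sqrt (2 * ((2*n+1:ℕ):ℝ)) := by
        rw [hEdef]
        apply Real.sqrt_le_sqrt
        push_cast
        linarith
      have step4 : (Real.exp 1 * τ / (2*n+1 : ℕ)) ^ (2*n+1) / Real.sqrt (2 * (2*n+1 : ℕ)) ≤
          q ^ (2*n+1) / E :=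
        div_le_div₀ (by positivity) h41 hE h42
      calc ‖g n‖ ≤ |t| ^ (2*n+1) * N ^ (n+1) / ((2*n+1)! : ℝ) := step1
        _ = s * (τ ^ (2*n+1) / ((2*n+1)! : ℝ)) := by rw [step2]; ring
        _ ≤ s * (q ^ (2*n+1) / E) := by
            apply mul_le_mul_of_nonneg_left _ hs
            exact step3.trans step4
        _ = C * q ^ (2*n+1) := by rw [hCdef]; ring
  -- summability
  have hgeo : Summable (fun n : ℕ => (q^2) ^ n) :=
    summable_geometric_of_lt_one (by positivity) hq2
  have hfa : ∀ n, f (n + a) = (C * q ^ (2*a+1)) * (q^2) ^ n := by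
    intro n
    simp only [hfdef, if_neg (by omega : ¬ n + a < a)]
    rw [show 2*(n+a)+1 = (2*a+1) + 2*n by ring, pow_add, pow_mul]
    ring
  have hfsum : Summable f := by
    rw [← summable_nat_add_iff a]
    exact (hgeo.mul_left _).congr (fun n => (hfa n).symm)
  have hgsum : Summable (fun n => ‖g n‖) :=
    Summable.of_nonneg_of_le (fun n => norm_nonneg _) hgle hfsum
  -- sum computation
  have hsumf : ∑' n, f n = C * q ^ (2*a+1) * (1 - q^2)⁻¹ := by
    rw [← hfsum.sum_add_tsum_nat_add a]
    rw [Finset.sum_eq_zero (fun k hk => by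
      simp only [hfdef, if_pos (Finset.mem_range.mp hk)]), zero_add]
    rw [tsum_congr hfa, tsum_mul_left, tsum_geometric_of_lt_one (by positivity) hq2]
  -- final comparison
  have hsa : (0:ℝ) < Real.sqrt a := Real.sqrt_pos.mpr (by exact_mod_cast ha')
  have key : q * Real.sqrt a ≤ E := by
    calc q * Real.sqrt a ≤ 1 * Real.sqrt a :=
        mul_le_mul_of_nonneg_right hq1.le (Real.sqrt_nonneg _)
      _ = Real.sqrt a := one_mul _
      _ ≤ E := by
          rw [hEdef]
          apply Real.sqrt_le_sqrt
          have : (0:ℝ) ≤ (a:ℝ) := by positivity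
          linarith
  have key2 : C * q ^ (2*a+1) ≤ s * q ^ (2*a) / Real.sqrt a := by
    rw [le_div_iff₀ hsa]
    calc C * q ^ (2*a+1) * Real.sqrt a = s * q ^ (2*a) * ((q * Real.sqrt a) / E) := by
          rw [hCdef]; field_simp; ring
      _ ≤ s * q ^ (2*a) * (E / E) := by
          have hsq : 0 ≤ s * q ^ (2*a) := by positivity
          have hdd : (q * Real.sqrt a) / E ≤ E / E := by gcongr
          exact mul_le_mul_of_nonneg_left hdd hsq
      _ = s * q ^ (2*a) := by rw [div_self hE.ne']; ring
  calc |Cpp X i j t| = ‖∑' n, g n‖ := rfl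
    _ ≤ ∑' n, ‖g n‖ := norm_tsum_le_tsum_norm hgsum
    _ ≤ ∑' n, f n := Summable.tsum_le_tsum hgle hgsum hfsum
    _ = C * q ^ (2*a+1) * (1 - q^2)⁻¹ := hsumf
    _ ≤ (s * q ^ (2*a) / Real.sqrt a) * (1 - q^2)⁻¹ := by gcongr
    _ = s * q ^ (2*a) / (Real.sqrt a * (1 - q^2)) := by
        rw [← div_eq_mul_inv, div_div]
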